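/- Multi-occasion unbiasedness of the centered and weighted estimating function with availability: suppose that for each t, E[μ₁ₜ − μ₀ₜ | 𝒮ₜ] = ⟨fₜ, β*⟩ almost surely on the event {Iₜ = 1} for a common β* ∈ ℝ^d. Then for every choice of bounded ℋₜ-measurable random variables gₜ (arbitrary working models), E[ Σ_{t=1}^{T} Iₜ·Wₜ·(Aₜ − p̃ₜ)·(Yₜ − gₜ − (Aₜ − p̃ₜ)·⟨fₜ, β*⟩)·fₜ ] = 0 in ℝ^d. -/

import Mathlib

open MeasureTheory ProbabilityTheory

lemma pullout {Ω : Type*} {m0 : MeasurableSpace Ω} {P : Measure Ω} [IsProbabilityMeasure P]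
    {𝔪 : MeasurableSpace Ω} (hm : 𝔪 ≤ m0) {U X : Ω → ℝ}
    (hU : StronglyMeasurable[𝔪] U) {C : ℝ} (hUb : ∀ᵐ ω ∂P, |U ω| ≤ C)
    (hX : Integrable X P) :
    ∫ ω, U ω * X ω ∂P = ∫ ω, U ω * (P[X|𝔪]) ω ∂P := by
  have hUX : Integrable (fun ω => U ω * X ω) P :=
    hX.bdd_mul (hU.mono hm).aestronglyMeasurable (by simpa [Real.norm_eq_abs] using hUb)
  rw [← integral_condExp hm (f := fun ω => U ω * X ω)]
  refine integral_congr_ae ?_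
  filter_upwards [condExp_mul_of_stronglyMeasurable_left (m := 𝔪) (μ := P) hU hUX hX] with ω hω using hω

lemma pullout_eq {Ω : Type*} {m0 : MeasurableSpace Ω} {P : Measure Ω} [IsProbabilityMeasure P]
    {𝔪 : MeasurableSpace Ω} (hm : 𝔪 ≤ m0) {U X : Ω → ℝ}
    (hU : StronglyMeasurable[𝔪] U) {C : ℝ} (hUb : ∀ᵐ ω ∂P, |U ω| ≤ C)
    (hX : Integrable X P) {r : Ω → ℝ} (hr : (P[X|𝔪]) =ᵐ[P] r) :
    ∫ ω, U ω * X ω ∂P = ∫ ω, U ω * r ω ∂P := by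
  rw [pullout hm hU hUb hX]
  refine integral_congr_ae ?_
  filter_upwards [hr] with ω hω; rw [hω]

lemma single_occasion {Ω : Type*} {m : MeasurableSpace Ω} {P : Measure Ω} [IsProbabilityMeasure P]
    (𝒮 ℋ : MeasurableSpace Ω) (hSH : 𝒮 ≤ ℋ) (hHm : ℋ ≤ m)
    (A Y I p q g c fi W μ₁ μ₀ : Ω → ℝ)
    (hA_meas : Measurable[m] A) (hA01 : ∀ ω, A ω = 0 ∨ A ω = 1)
    (hY : Integrable Y P)
    (hI_meas : Measurable[𝒮] I) (hI01 : ∀ ω, I ω = 0 ∨ I ω = 1)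
    (ε : ℝ) (hε : 0 < ε)
    (hp_meas : Measurable[ℋ] p) (hp_bdd : ∀ᵐ ω ∂P, ε ≤ p ω ∧ p ω ≤ 1 - ε)
    (hp_ce : p =ᵐ[P] P[A|ℋ])
    (hq_meas : Measurable[𝒮] q) (hq_bdd : ∀ᵐ ω ∂P, ε ≤ q ω ∧ q ω ≤ 1 - ε)
    (hg_meas : Measurable[ℋ] g) (Cg : ℝ) (hg_bdd : ∀ ω, |g ω| ≤ Cg)
    (hfi_meas : Measurable[𝒮] fi) (Cf : ℝ) (hfi_bdd : ∀ ω, |fi ω| ≤ Cf)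
    (hc_meas : Measurable[𝒮] c) (Cc : ℝ) (hc_bdd : ∀ ω, |c ω| ≤ Cc)
    (hW : ∀ ω, W ω = A ω * (q ω / p ω) + (1 - A ω) * ((1 - q ω) / (1 - p ω)))
    (hμ₁ : ∀ ω, μ₁ ω = (P[(fun ω' => A ω' * Y ω')|ℋ]) ω / p ω)
    (hμ₀ : ∀ ω, μ₀ ω = (P[(fun ω' => (1 - A ω') * Y ω')|ℋ]) ω / (1 - p ω))
    (h_model : ∀ᵐ ω ∂P, I ω = 1 → (P[(fun ω' => μ₁ ω' - μ₀ ω')|𝒮]) ω = c ω) :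
    Integrable (fun ω => I ω * W ω * (A ω - q ω)
      * (Y ω - g ω - (A ω - q ω) * c ω) * fi ω) P ∧
    ∫ ω, I ω * W ω * (A ω - q ω)
      * (Y ω - g ω - (A ω - q ω) * c ω) * fi ω ∂P = 0 := by
  -- basic bounds
  have hI1 : ∀ ω, |I ω| ≤ 1 := by intro ω; rcases hI01 ω with h | h <;> simp [h]
  have hA1 : ∀ ω, |A ω| ≤ 1 := by intro ω; rcases hA01 ω with h | h <;> simp [h]
  have h1A1 : ∀ ω, |1 - A ω| ≤ 1 := by intro ω; rcases hA01 ω with h | h <;> simp [h]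
  have hΩne : Nonempty Ω := by
    by_contra hne
    have h1 : (P Set.univ) = 1 := measure_univ
    rw [Set.univ_eq_empty_iff.mpr (not_nonempty_iff.mp hne)] at h1
    simp at h1
  have hCf0 : 0 ≤ Cf := le_trans (abs_nonneg _) (hfi_bdd (Classical.arbitrary Ω))
  have hCg0 : 0 ≤ Cg := le_trans (abs_nonneg _) (hg_bdd (Classical.arbitrary Ω))
  have hCc0 : 0 ≤ Cc := le_trans (abs_nonneg _) (hc_bdd (Classical.arbitrary Ω))
  -- a.e. facts about p and q
  have hp' : ∀ᵐ ω ∂P, p ω ≠ 0 ∧ (1 - p ω) ≠ 0 ∧ ε ≤ p ω ∧ ε ≤ 1 - p ω := by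
    filter_upwards [hp_bdd] with ω h
    have h1 : ε ≤ 1 - p ω := by linarith [h.2]
    exact ⟨ne_of_gt (lt_of_lt_of_le hε h.1), ne_of_gt (lt_of_lt_of_le hε h1), h.1, h1⟩
  have hq' : ∀ᵐ ω ∂P, 0 ≤ q ω ∧ q ω ≤ 1 := by
    filter_upwards [hq_bdd] with ω h
    exact ⟨le_trans hε.le h.1, by linarith [h.2]⟩
  -- the key 𝒮-measurable multiplier h
  set h : Ω → ℝ := fun ω => I ω * fi ω * q ω * (1 - q ω) with hh_def
  have hh_meas : Measurable[𝒮] h :=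
    ((hI_meas.mul hfi_meas).mul hq_meas).mul (measurable_const.sub hq_meas)
  have hh_bdd : ∀ᵐ ω ∂P, |h ω| ≤ Cf := by
    filter_upwards [hq'] with ω hq
    have hq1 : |q ω| ≤ 1 := abs_le.2 ⟨by linarith [hq.1], hq.2⟩
    have hq2 : |1 - q ω| ≤ 1 := abs_le.2 ⟨by linarith [hq.2], by linarith [hq.1]⟩
    calc |h ω| = |I ω| * |fi ω| * |q ω| * |1 - q ω| := by
          simp [hh_def, abs_mul]
      _ ≤ 1 * Cf * 1 * 1 := by
          gcongr
          · exact hI1 ω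
          · exact hfi_bdd ω
      _ = Cf := by ring
  -- integrable building blocks
  have hAmm : Measurable[m] A := hA_meas
  have hAY : Integrable (fun ω => A ω * Y ω) P :=
    hY.bdd_mul (hA_meas.aestronglyMeasurable (μ := P))
      (Filter.Eventually.of_forall fun ω => by simpa [Real.norm_eq_abs] using hA1 ω)
  have h1AY : Integrable (fun ω => (1 - A ω) * Y ω) P :=
    hY.bdd_mul ((measurable_const.sub hA_meas).aestronglyMeasurable (μ := P))
      (Filter.Eventually.of_forall fun ω => by simpa [Real.norm_eq_abs] using h1A1 ω)
  have hAint : Integrable A P := by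
    have := (integrable_const (1 : ℝ) (μ := P)).bdd_mul (hA_meas.aestronglyMeasurable (μ := P))
      (Filter.Eventually.of_forall fun ω => by simpa [Real.norm_eq_abs] using hA1 ω)
    simpa using this
  have h1Aint : Integrable (fun ω => 1 - A ω) P := (integrable_const 1).sub hAint
  -- conditional expectation of 1 - A
  have h1A_ce : (P[(fun ω => 1 - A ω)|ℋ]) =ᵐ[P] (fun ω => 1 - p ω) := by
    have h0 : (P[(fun ω => 1 - A ω)|ℋ]) =ᵐ[P] P[(fun _ => (1:ℝ))|ℋ] - P[A|ℋ] := by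
      have := condExp_sub (m := ℋ) (μ := P) (integrable_const (1 : ℝ)) hAint
      filter_upwards [this] with ω hω
      exact hω
    have h1 : P[(fun _ => (1:ℝ))|ℋ] = fun _ => (1:ℝ) := condExp_const hHm 1
    filter_upwards [h0, hp_ce] with ω hω hpω
    simp only [Pi.sub_apply, h1] at hω
    rw [hω, hpω]
  -- μ₁ and μ₀ integrable
  have hpinv_bdd : ∀ᵐ ω ∂P, |(p ω)⁻¹| ≤ ε⁻¹ := by
    filter_upwards [hp'] with ω hω
    rw [abs_of_pos (inv_pos.2 (lt_of_lt_of_le hε hω.2.2.1))]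
    exact inv_anti₀ hε hω.2.2.1
  have h1pinv_bdd : ∀ᵐ ω ∂P, |(1 - p ω)⁻¹| ≤ ε⁻¹ := by
    filter_upwards [hp'] with ω hω
    rw [abs_of_pos (inv_pos.2 (lt_of_lt_of_le hε hω.2.2.2))]
    exact inv_anti₀ hε hω.2.2.2
  have hμ₁int : Integrable μ₁ P := by
    have : Integrable (fun ω => (p ω)⁻¹ * (P[(fun ω' => A ω' * Y ω')|ℋ]) ω) P :=
      integrable_condExp.bdd_mul (((hp_meas.inv).mono hHm le_rfl).aestronglyMeasurable)
        (by simpa [Real.norm_eq_abs, abs_inv] using hpinv_bdd)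
    refine this.congr (Filter.Eventually.of_forall fun ω => ?_)
    rw [hμ₁ ω, div_eq_mul_inv, mul_comm]
  have hμ₀int : Integrable μ₀ P := by
    have : Integrable (fun ω => (1 - p ω)⁻¹ * (P[(fun ω' => (1 - A ω') * Y ω')|ℋ]) ω) P :=
      integrable_condExp.bdd_mul (((measurable_const.sub hp_meas).inv.mono hHm le_rfl).aestronglyMeasurable)
        (by simpa [Real.norm_eq_abs, abs_inv] using h1pinv_bdd)
    refine this.congr (Filter.Eventually.of_forall fun ω => ?_)
    rw [hμ₀ ω, div_eq_mul_inv, mul_comm]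
    -- measurable multipliers w.r.t. ℋ
  have hhH : Measurable[ℋ] h := hh_meas.mono hSH le_rfl
  have hgH : Measurable[ℋ] g := hg_meas
  have hcH : Measurable[ℋ] c := hc_meas.mono hSH le_rfl
  have hqH : Measurable[ℋ] q := hq_meas.mono hSH le_rfl
  have mU1 : Measurable[ℋ] (fun ω => h ω / p ω) := hhH.div hp_meas
  have mU2 : Measurable[ℋ] (fun ω => h ω / (1 - p ω)) :=
    hhH.div (measurable_const.sub hp_meas)
  have mU3a : Measurable[ℋ] (fun ω => h ω * g ω / p ω) := (hhH.mul hgH).div hp_meas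
  have mU3b : Measurable[ℋ] (fun ω => h ω * g ω / (1 - p ω)) :=
    (hhH.mul hgH).div (measurable_const.sub hp_meas)
  have mU4a : Measurable[ℋ] (fun ω => h ω * c ω * (1 - q ω) / p ω) :=
    ((hhH.mul hcH).mul (measurable_const.sub hqH)).div hp_meas
  have mU4b : Measurable[ℋ] (fun ω => h ω * c ω * q ω / (1 - p ω)) :=
    ((hhH.mul hcH).mul hqH).div (measurable_const.sub hp_meas)
  -- a.e. bounds on the multipliers
  have hU1b : ∀ᵐ ω ∂P, |h ω / p ω| ≤ Cf * ε⁻¹ := by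
    filter_upwards [hh_bdd, hpinv_bdd] with ω h1 h2
    rw [div_eq_mul_inv, abs_mul]
    exact mul_le_mul h1 h2 (abs_nonneg _) hCf0
  have hU2b : ∀ᵐ ω ∂P, |h ω / (1 - p ω)| ≤ Cf * ε⁻¹ := by
    filter_upwards [hh_bdd, h1pinv_bdd] with ω h1 h2
    rw [div_eq_mul_inv, abs_mul]
    exact mul_le_mul h1 h2 (abs_nonneg _) hCf0
  have hU3ab : ∀ᵐ ω ∂P, |h ω * g ω / p ω| ≤ Cf * Cg * ε⁻¹ := by
    filter_upwards [hh_bdd, hpinv_bdd] with ω h1 h2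
    rw [div_eq_mul_inv, abs_mul, abs_mul]
    exact mul_le_mul (mul_le_mul h1 (hg_bdd ω) (abs_nonneg _) hCf0) h2 (abs_nonneg _)
      (mul_nonneg hCf0 hCg0)
  have hU3bb : ∀ᵐ ω ∂P, |h ω * g ω / (1 - p ω)| ≤ Cf * Cg * ε⁻¹ := by
    filter_upwards [hh_bdd, h1pinv_bdd] with ω h1 h2
    rw [div_eq_mul_inv, abs_mul, abs_mul]
    exact mul_le_mul (mul_le_mul h1 (hg_bdd ω) (abs_nonneg _) hCf0) h2 (abs_nonneg _)
      (mul_nonneg hCf0 hCg0)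
  have hU4ab : ∀ᵐ ω ∂P, |h ω * c ω * (1 - q ω) / p ω| ≤ Cf * Cc * ε⁻¹ := by
    filter_upwards [hh_bdd, hpinv_bdd, hq'] with ω h1 h2 h3
    rw [div_eq_mul_inv, abs_mul, abs_mul, abs_mul]
    have h4 : |1 - q ω| ≤ 1 := abs_le.2 ⟨by linarith [h3.2], by linarith [h3.1]⟩
    calc |h ω| * |c ω| * |1 - q ω| * |(p ω)⁻¹| ≤ (Cf * Cc * 1) * ε⁻¹ := by
          refine mul_le_mul ?_ h2 (abs_nonneg _) (by nlinarith)
          exact mul_le_mul (mul_le_mul h1 (hc_bdd ω) (abs_nonneg _) hCf0) h4 (abs_nonneg _)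
            (mul_nonneg hCf0 hCc0)
      _ = Cf * Cc * ε⁻¹ := by ring
  have hU4bb : ∀ᵐ ω ∂P, |h ω * c ω * q ω / (1 - p ω)| ≤ Cf * Cc * ε⁻¹ := by
    filter_upwards [hh_bdd, h1pinv_bdd, hq'] with ω h1 h2 h3
    rw [div_eq_mul_inv, abs_mul, abs_mul, abs_mul]
    have h4 : |q ω| ≤ 1 := abs_le.2 ⟨by linarith [h3.1], h3.2⟩
    calc |h ω| * |c ω| * |q ω| * |(1 - p ω)⁻¹| ≤ (Cf * Cc * 1) * ε⁻¹ := by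
          refine mul_le_mul ?_ h2 (abs_nonneg _) (by nlinarith)
          exact mul_le_mul (mul_le_mul h1 (hc_bdd ω) (abs_nonneg _) hCf0) h4 (abs_nonneg _)
            (mul_nonneg hCf0 hCc0)
      _ = Cf * Cc * ε⁻¹ := by ring
  -- pointwise a.e. decomposition of the estimating function
  have hZ_ae : (fun ω => I ω * W ω * (A ω - q ω)
        * (Y ω - g ω - (A ω - q ω) * c ω) * fi ω)
      =ᵐ[P] (fun ω => (h ω / p ω) * (A ω * Y ω)
        - (h ω / (1 - p ω)) * ((1 - A ω) * Y ω)
        - ((h ω * g ω / p ω) * A ω - (h ω * g ω / (1 - p ω)) * (1 - A ω))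
        - ((h ω * c ω * (1 - q ω) / p ω) * A ω
            + (h ω * c ω * q ω / (1 - p ω)) * (1 - A ω))) := by
    filter_upwards [hp'] with ω hp
    obtain ⟨hp0, hp1, -, -⟩ := hp
    rcases hA01 ω with h0 | h0 <;>
    · simp only [hW ω, h0, hh_def]
      field_simp
      ring
  -- integrability of the six pieces
  have hT1 : Integrable (fun ω => (h ω / p ω) * (A ω * Y ω)) P :=
    hAY.bdd_mul ((mU1.mono hHm le_rfl).aestronglyMeasurable (μ := P))
      (by filter_upwards [hU1b] with ω hω; rw [Real.norm_eq_abs]; exact hω)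
  have hT2 : Integrable (fun ω => (h ω / (1 - p ω)) * ((1 - A ω) * Y ω)) P :=
    h1AY.bdd_mul ((mU2.mono hHm le_rfl).aestronglyMeasurable (μ := P))
      (by filter_upwards [hU2b] with ω hω; rw [Real.norm_eq_abs]; exact hω)
  have hT3a : Integrable (fun ω => (h ω * g ω / p ω) * A ω) P :=
    hAint.bdd_mul ((mU3a.mono hHm le_rfl).aestronglyMeasurable (μ := P))
      (by filter_upwards [hU3ab] with ω hω; rw [Real.norm_eq_abs]; exact hω)
  have hT3b : Integrable (fun ω => (h ω * g ω / (1 - p ω)) * (1 - A ω)) P :=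
    h1Aint.bdd_mul ((mU3b.mono hHm le_rfl).aestronglyMeasurable (μ := P))
      (by filter_upwards [hU3bb] with ω hω; rw [Real.norm_eq_abs]; exact hω)
  have hT4a : Integrable (fun ω => (h ω * c ω * (1 - q ω) / p ω) * A ω) P :=
    hAint.bdd_mul ((mU4a.mono hHm le_rfl).aestronglyMeasurable (μ := P))
      (by filter_upwards [hU4ab] with ω hω; rw [Real.norm_eq_abs]; exact hω)
  have hT4b : Integrable (fun ω => (h ω * c ω * q ω / (1 - p ω)) * (1 - A ω)) P :=
    h1Aint.bdd_mul ((mU4b.mono hHm le_rfl).aestronglyMeasurable (μ := P))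
      (by filter_upwards [hU4bb] with ω hω; rw [Real.norm_eq_abs]; exact hω)
  -- integrability of the estimating function
  have hZint : Integrable (fun ω => I ω * W ω * (A ω - q ω)
      * (Y ω - g ω - (A ω - q ω) * c ω) * fi ω) P := by
    refine Integrable.congr ?_ hZ_ae.symm
    exact ((hT1.sub hT2).sub (hT3a.sub hT3b)).sub (hT4a.add hT4b)
  refine ⟨hZint, ?_⟩
  -- compute the six integrals via the pull-out property
  have E1 : ∫ ω, (h ω / p ω) * (A ω * Y ω) ∂P = ∫ ω, h ω * μ₁ ω ∂P := by
    rw [pullout hHm (mU1.stronglyMeasurable) hU1b hAY]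
    refine integral_congr_ae (Filter.Eventually.of_forall fun ω => ?_)
    simp only [hμ₁, div_mul_eq_mul_div, mul_div_assoc]
  have E2 : ∫ ω, (h ω / (1 - p ω)) * ((1 - A ω) * Y ω) ∂P = ∫ ω, h ω * μ₀ ω ∂P := by
    rw [pullout hHm (mU2.stronglyMeasurable) hU2b h1AY]
    refine integral_congr_ae (Filter.Eventually.of_forall fun ω => ?_)
    simp only [hμ₀, div_mul_eq_mul_div, mul_div_assoc]
  have E3a : ∫ ω, (h ω * g ω / p ω) * A ω ∂P = ∫ ω, h ω * g ω ∂P := by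
    rw [pullout_eq hHm (mU3a.stronglyMeasurable) hU3ab hAint hp_ce.symm]
    refine integral_congr_ae ?_
    filter_upwards [hp'] with ω hp
    rw [div_mul_cancel₀ _ hp.1]
  have E3b : ∫ ω, (h ω * g ω / (1 - p ω)) * (1 - A ω) ∂P = ∫ ω, h ω * g ω ∂P := by
    rw [pullout_eq hHm (mU3b.stronglyMeasurable) hU3bb h1Aint h1A_ce]
    refine integral_congr_ae ?_
    filter_upwards [hp'] with ω hp
    rw [div_mul_cancel₀ _ hp.2.1]
  have E4a : ∫ ω, (h ω * c ω * (1 - q ω) / p ω) * A ω ∂P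
      = ∫ ω, h ω * c ω * (1 - q ω) ∂P := by
    rw [pullout_eq hHm (mU4a.stronglyMeasurable) hU4ab hAint hp_ce.symm]
    refine integral_congr_ae ?_
    filter_upwards [hp'] with ω hp
    rw [div_mul_cancel₀ _ hp.1]
  have E4b : ∫ ω, (h ω * c ω * q ω / (1 - p ω)) * (1 - A ω) ∂P
      = ∫ ω, h ω * c ω * q ω ∂P := by
    rw [pullout_eq hHm (mU4b.stronglyMeasurable) hU4bb h1Aint h1A_ce]
    refine integral_congr_ae ?_
    filter_upwards [hp'] with ω hp
    rw [div_mul_cancel₀ _ hp.2.1]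
  -- remaining integrability facts
  have hhμ₁ : Integrable (fun ω => h ω * μ₁ ω) P :=
    hμ₁int.bdd_mul ((hh_meas.mono (hSH.trans hHm) le_rfl).aestronglyMeasurable (μ := P))
      (by filter_upwards [hh_bdd] with ω hω; rw [Real.norm_eq_abs]; exact hω)
  have hhμ₀ : Integrable (fun ω => h ω * μ₀ ω) P :=
    hμ₀int.bdd_mul ((hh_meas.mono (hSH.trans hHm) le_rfl).aestronglyMeasurable (μ := P))
      (by filter_upwards [hh_bdd] with ω hω; rw [Real.norm_eq_abs]; exact hω)
  have hbc1 : Integrable (fun ω => h ω * c ω * (1 - q ω)) P := by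
    have := (integrable_const (1 : ℝ) (μ := P)).bdd_mul
      ((((hh_meas.mul hc_meas).mul (measurable_const.sub hq_meas)).mono
        (hSH.trans hHm) le_rfl).aestronglyMeasurable (μ := P))
      (c := Cf * Cc * 1) (by
        filter_upwards [hh_bdd, hq'] with ω h1 h3
        have h4 : |1 - q ω| ≤ 1 := abs_le.2 ⟨by linarith [h3.2], by linarith [h3.1]⟩
        rw [Real.norm_eq_abs, Pi.mul_apply, Pi.mul_apply, abs_mul, abs_mul]
        exact mul_le_mul (mul_le_mul h1 (hc_bdd ω) (abs_nonneg _) hCf0) h4 (abs_nonneg _)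
          (mul_nonneg hCf0 hCc0))
    simpa using this
  have hbc2 : Integrable (fun ω => h ω * c ω * q ω) P := by
    have := (integrable_const (1 : ℝ) (μ := P)).bdd_mul
      ((((hh_meas.mul hc_meas).mul hq_meas).mono
        (hSH.trans hHm) le_rfl).aestronglyMeasurable (μ := P))
      (c := Cf * Cc * 1) (by
        filter_upwards [hh_bdd, hq'] with ω h1 h3
        have h4 : |q ω| ≤ 1 := abs_le.2 ⟨by linarith [h3.1], h3.2⟩
        rw [Real.norm_eq_abs, Pi.mul_apply, Pi.mul_apply, abs_mul, abs_mul]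
        exact mul_le_mul (mul_le_mul h1 (hc_bdd ω) (abs_nonneg _) hCf0) h4 (abs_nonneg _)
          (mul_nonneg hCf0 hCc0))
    simpa using this
  have hhc : Integrable (fun ω => h ω * c ω) P := by
    have := (integrable_const (1 : ℝ) (μ := P)).bdd_mul
      (((hh_meas.mul hc_meas).mono (hSH.trans hHm) le_rfl).aestronglyMeasurable (μ := P))
      (c := Cf * Cc) (by
        filter_upwards [hh_bdd] with ω h1
        rw [Real.norm_eq_abs, Pi.mul_apply, abs_mul]
        exact mul_le_mul h1 (hc_bdd ω) (abs_nonneg _) hCf0)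
    simpa using this
  -- key identity from the moderated effect model
  have Ekey : ∫ ω, h ω * μ₁ ω ∂P - ∫ ω, h ω * μ₀ ω ∂P = ∫ ω, h ω * c ω ∂P := by
    have hsub : Integrable (fun ω => μ₁ ω - μ₀ ω) P := hμ₁int.sub hμ₀int
    have e1 : ∫ ω, h ω * μ₁ ω ∂P - ∫ ω, h ω * μ₀ ω ∂P
        = ∫ ω, h ω * (μ₁ ω - μ₀ ω) ∂P := by
      rw [← integral_sub hhμ₁ hhμ₀]
      exact integral_congr_ae (Filter.Eventually.of_forall fun ω => by ring)
    have e2 : ∫ ω, h ω * (μ₁ ω - μ₀ ω) ∂P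
        = ∫ ω, h ω * (P[(fun ω' => μ₁ ω' - μ₀ ω')|𝒮]) ω ∂P :=
      pullout (hSH.trans hHm) hh_meas.stronglyMeasurable hh_bdd hsub
    have e3 : ∫ ω, h ω * (P[(fun ω' => μ₁ ω' - μ₀ ω')|𝒮]) ω ∂P = ∫ ω, h ω * c ω ∂P := by
      refine integral_congr_ae ?_
      filter_upwards [h_model] with ω hmod
      rcases hI01 ω with h0 | h0
      · simp [hh_def, h0]
      · rw [hmod h0]
    rw [e1, e2, e3]
  -- assemble everything
  rw [integral_congr_ae hZ_ae]
  have hT12 : Integrable (fun ω => h ω / p ω * (A ω * Y ω)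
      - h ω / (1 - p ω) * ((1 - A ω) * Y ω)) P := hT1.sub hT2
  have hT3 : Integrable (fun ω => h ω * g ω / p ω * A ω
      - h ω * g ω / (1 - p ω) * (1 - A ω)) P := hT3a.sub hT3b
  have hT4 : Integrable (fun ω => h ω * c ω * (1 - q ω) / p ω * A ω
      + h ω * c ω * q ω / (1 - p ω) * (1 - A ω)) P := hT4a.add hT4b
  have hT123 : Integrable (fun ω => (h ω / p ω * (A ω * Y ω)
      - h ω / (1 - p ω) * ((1 - A ω) * Y ω))
      - (h ω * g ω / p ω * A ω - h ω * g ω / (1 - p ω) * (1 - A ω))) P := hT12.sub hT3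
  rw [integral_sub hT123 hT4, integral_sub hT12 hT3, integral_sub hT1 hT2,
    integral_sub hT3a hT3b, integral_add hT4a hT4b]
  rw [E1, E2, E3a, E3b, E4a, E4b]
  have e4 : ∫ ω, h ω * c ω * (1 - q ω) ∂P + ∫ ω, h ω * c ω * q ω ∂P
      = ∫ ω, h ω * c ω ∂P := by
    rw [← integral_add hbc1 hbc2]
    exact integral_congr_ae (Filter.Eventually.of_forall fun ω => by ring)
  rw [e4]
  linarith [Ekey]

/-- Multi-occasion unbiasedness of the centered and weighted estimating
function with availability: if for each occasion `t`, `E[μ₁ₜ − μ₀ₜ | 𝒮ₜ] = ⟨fₜ, β*⟩` a.s. on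
the event `{Iₜ = 1}`, then for any bounded `ℋₜ`-measurable working models `gₜ`,
`E[Σₜ Iₜ·Wₜ·(Aₜ − p̃ₜ)·(Yₜ − gₜ − (Aₜ − p̃ₜ)·⟨fₜ, β*⟩)·fₜ] = 0` in `ℝ^d`. -/
theorem multi_occasion_estimating_function_unbiased
    {Ω : Type*} {m : MeasurableSpace Ω} {P : Measure Ω} [IsProbabilityMeasure P]
    (T : ℕ) (hT : 0 < T)
    (𝒮 ℋ : Fin T → MeasurableSpace Ω)
    (hSH : ∀ t, 𝒮 t ≤ ℋ t) (hHm : ∀ t, ℋ t ≤ m)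
    (A : Fin T → Ω → ℝ) (hA_meas : ∀ t, Measurable (A t))
    (hA01 : ∀ t ω, A t ω = 0 ∨ A t ω = 1)
    (Y : Fin T → Ω → ℝ) (hY_int : ∀ t, Integrable (Y t) P)
    (I : Fin T → Ω → ℝ) (hI_meas : ∀ t, Measurable[𝒮 t] (I t))
    (hI01 : ∀ t ω, I t ω = 0 ∨ I t ω = 1)
    (ε : ℝ) (hε_pos : 0 < ε) (hε_lt : ε < 1 / 2)
    (p : Fin T → Ω → ℝ) (hp_meas : ∀ t, Measurable[ℋ t] (p t))
    (hp_bdd : ∀ t, ∀ᵐ ω ∂P, ε ≤ p t ω ∧ p t ω ≤ 1 - ε)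
    (hp_ce : ∀ t, p t =ᵐ[P] P[A t|ℋ t])
    (q : Fin T → Ω → ℝ) (hq_meas : ∀ t, Measurable[𝒮 t] (q t))
    (hq_bdd : ∀ t, ∀ᵐ ω ∂P, ε ≤ q t ω ∧ q t ω ≤ 1 - ε)
    (W : Fin T → Ω → ℝ)
    (hW : ∀ t ω, W t ω = A t ω * (q t ω / p t ω)
      + (1 - A t ω) * ((1 - q t ω) / (1 - p t ω)))
    (μ₁ μ₀ : Fin T → Ω → ℝ)
    (hμ₁ : ∀ t ω, μ₁ t ω = (P[(fun ω' => A t ω' * Y t ω')|ℋ t]) ω / p t ω)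
    (hμ₀ : ∀ t ω, μ₀ t ω = (P[(fun ω' => (1 - A t ω') * Y t ω')|ℋ t]) ω / (1 - p t ω))
    (d : ℕ) (f : Fin T → Ω → Fin d → ℝ)
    (hf_meas : ∀ t i, Measurable[𝒮 t] fun ω => f t ω i)
    (hf_bdd : ∃ C : ℝ, ∀ t ω i, |f t ω i| ≤ C)
    (βstar : Fin d → ℝ)
    (h_model : ∀ t, ∀ᵐ ω ∂P, I t ω = 1 →
      (P[(fun ω' => μ₁ t ω' - μ₀ t ω')|𝒮 t]) ω = ∑ j, f t ω j * βstar j) :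
    ∀ g : Fin T → Ω → ℝ, (∀ t, Measurable[ℋ t] (g t)) →
      (∃ C : ℝ, ∀ t ω, |g t ω| ≤ C) →
      ∀ i, ∫ ω, (∑ t, I t ω * W t ω * (A t ω - q t ω)
        * (Y t ω - g t ω - (A t ω - q t ω) * ∑ j, f t ω j * βstar j) * f t ω i) ∂P = 0 := by
  intro g hg_meas hg_bdd i
  obtain ⟨Cg, hCg⟩ := hg_bdd
  obtain ⟨Cf, hCf⟩ := hf_bdd
  set c : Fin T → Ω → ℝ := fun t ω => ∑ j, f t ω j * βstar j with hc_def
  have hc_meas : ∀ t, Measurable[𝒮 t] (c t) := fun t =>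
    Finset.measurable_sum Finset.univ fun j _ => (hf_meas t j).mul measurable_const
  have hc_bdd : ∀ t ω, |c t ω| ≤ ∑ j, Cf * |βstar j| := by
    intro t ω
    refine le_trans (Finset.abs_sum_le_sum_abs _ _) (Finset.sum_le_sum fun j _ => ?_)
    rw [abs_mul]
    exact mul_le_mul_of_nonneg_right (hCf t ω j) (abs_nonneg _)
  have hsingle : ∀ t : Fin T,
      Integrable (fun ω => I t ω * W t ω * (A t ω - q t ω)
        * (Y t ω - g t ω - (A t ω - q t ω) * c t ω) * f t ω i) P ∧
      ∫ ω, I t ω * W t ω * (A t ω - q t ω)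
        * (Y t ω - g t ω - (A t ω - q t ω) * c t ω) * f t ω i ∂P = 0 := by
    intro t
    exact single_occasion (𝒮 t) (ℋ t) (hSH t) (hHm t)
      (A t) (Y t) (I t) (p t) (q t) (g t) (c t) (fun ω => f t ω i) (W t) (μ₁ t) (μ₀ t)
      (hA_meas t) (hA01 t) (hY_int t) (hI_meas t) (hI01 t) ε hε_pos
      (hp_meas t) (hp_bdd t) (hp_ce t) (hq_meas t) (hq_bdd t)
      (hg_meas t) Cg (hCg t) (hf_meas t i) Cf (fun ω => hCf t ω i)
      (hc_meas t) (∑ j, Cf * |βstar j|) (hc_bdd t)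
      (hW t) (hμ₁ t) (hμ₀ t) (h_model t)
  rw [integral_finset_sum Finset.univ (fun t _ => (hsingle t).1)]
  exact Finset.sum_eq_zero fun t _ => (hsingle t).2
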